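/- For any lists p and y* over a type α with decidable equality, if k < |y*| and D(p, y*_{<k}) = m(p, y*), then the token a = y*[k] (the (k+1)-st element of y*) is an optimal extension of p: the minimum of D(p ++ (a :: s), y*) over all lists s equals m(p, y*), where m(p, y*) = min over 0 ≤ j ≤ |y*| of D(p, y*_{<j}). -/

import Mathlib

/-- Unit-cost Levenshtein recursion (replaces Mathlib's removed `levenshtein Levenshtein.defaultCost`). -/
def unitLevenshtein {α : Type*} [DecidableEq α] : List α → List α → ℕ
  | [], ys => ys.length
  | _ :: xs, [] => 1 + unitLevenshtein xs []
  | x :: xs, y :: ys =>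
    min (1 + unitLevenshtein xs (y :: ys))
      (min (1 + unitLevenshtein (x :: xs) ys) ((if x = y then 0 else 1) + unitLevenshtein xs ys))

/-- Unit-cost Levenshtein edit distance between two lists. -/
def editDist {α : Type*} [DecidableEq α] (u v : List α) : ℕ :=
  unitLevenshtein u v

/-- `rowMin p y = min over 0 ≤ j ≤ |y|` of the edit distance between `p` and `y.take j`. -/
def rowMin {α : Type*} [DecidableEq α] (p y : List α) : ℕ :=
  (Finset.range (y.length + 1)).inf' (by simp) (fun j => editDist p (y.take j))

section Aux

variable {α : Type*} [DecidableEq α]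

lemma editDist_nil_right (u : List α) : editDist u [] = u.length := by
  induction u with
  | nil => simp [editDist, unitLevenshtein]
  | cons x u ih =>
    have : editDist (x :: u) [] = 1 + editDist u [] := by simp [editDist, unitLevenshtein]
    simp only [List.length_cons]
    omega

lemma editDist_nil_left (v : List α) : editDist [] v = v.length := by
  induction v with
  | nil => simp [editDist, unitLevenshtein]
  | cons y v ih =>
    have : editDist [] (y :: v) = 1 + editDist [] v := by simp [editDist, unitLevenshtein, Nat.add_comm]
    simp only [List.length_cons]
    omega

lemma editDist_cons_cons (x y : α) (u v : List α) :
    editDist (x :: u) (y :: v) =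
      min (1 + editDist u (y :: v))
        (min (1 + editDist (x :: u) v)
          ((if x = y then 0 else 1) + editDist u v)) := by
  simp [editDist, unitLevenshtein]

lemma editDist_le_delete (x : α) (u v : List α) :
    editDist (x :: u) v ≤ 1 + editDist u v := by
  cases v with
  | nil => simp [editDist_nil_right]
  | cons y v => rw [editDist_cons_cons]; exact min_le_left _ _

lemma editDist_le_insert (y : α) (u v : List α) :
    editDist u (y :: v) ≤ 1 + editDist u v := by
  cases u with
  | nil => simp [editDist_nil_left]
  | cons x u => rw [editDist_cons_cons]; exact le_trans (min_le_right _ _) (min_le_left _ _)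

lemma editDist_le_sub (x y : α) (u v : List α) :
    editDist (x :: u) (y :: v) ≤ (if x = y then 0 else 1) + editDist u v := by
  rw [editDist_cons_cons]; exact le_trans (min_le_right _ _) (min_le_right _ _)

lemma editDist_self (t : List α) : editDist t t = 0 := by
  induction t with
  | nil => simp [editDist, unitLevenshtein]
  | cons x t ih =>
    have := editDist_le_sub x x t t
    simp [ih] at this
    omega

/-- Appending a common suffix doesn't increase edit distance. -/
lemma editDist_append_append (t : List α) : ∀ n (u v : List α), u.length + v.length ≤ n →
    editDist (u ++ t) (v ++ t) ≤ editDist u v := by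
  intro n
  induction n with
  | zero =>
    intro u v h
    match u, v with
    | [], [] => simp [editDist_self]
    | x :: u, _ => simp at h
    | [], y :: v => simp at h
  | succ n ih =>
    intro u v h
    match u, v with
    | [], [] => simp [editDist_self]
    | [], y :: v =>
      calc editDist ([] ++ t) ((y :: v) ++ t)
          ≤ 1 + editDist ([] ++ t) (v ++ t) := editDist_le_insert _ _ _
        _ ≤ 1 + editDist ([] : List α) v := by
            have := ih [] v (by simp at h ⊢; omega)
            omega
        _ = editDist ([] : List α) (y :: v) := by
            simp [editDist_nil_left]; omega
    | x :: u, [] =>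
      calc editDist ((x :: u) ++ t) ([] ++ t)
          ≤ 1 + editDist (u ++ t) ([] ++ t) := editDist_le_delete _ _ _
        _ ≤ 1 + editDist u ([] : List α) := by
            have := ih u [] (by simp at h ⊢; omega)
            omega
        _ = editDist (x :: u) ([] : List α) := by
            simp [editDist_nil_right]; omega
    | x :: u, y :: v =>
      rw [editDist_cons_cons x y u v]
      have h1 : editDist ((x :: u) ++ t) ((y :: v) ++ t) ≤ 1 + editDist u (y :: v) := by
        calc editDist ((x :: u) ++ t) ((y :: v) ++ t)
            ≤ 1 + editDist (u ++ t) ((y :: v) ++ t) := editDist_le_delete _ _ _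
          _ ≤ 1 + editDist u (y :: v) := by
              have := ih u (y :: v) (by simp at h ⊢; omega); omega
      have h2 : editDist ((x :: u) ++ t) ((y :: v) ++ t) ≤ 1 + editDist (x :: u) v := by
        calc editDist ((x :: u) ++ t) ((y :: v) ++ t)
            ≤ 1 + editDist ((x :: u) ++ t) (v ++ t) := editDist_le_insert _ _ _
          _ ≤ 1 + editDist (x :: u) v := by
              have := ih (x :: u) v (by simp at h ⊢; omega); omega
      have h3 : editDist ((x :: u) ++ t) ((y :: v) ++ t) ≤
          (if x = y then 0 else 1) + editDist u v := by
        calc editDist ((x :: u) ++ t) ((y :: v) ++ t)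
            = editDist (x :: (u ++ t)) (y :: (v ++ t)) := by simp
          _ ≤ (if x = y then 0 else 1) + editDist (u ++ t) (v ++ t) := editDist_le_sub _ _ _ _
          _ ≤ (if x = y then 0 else 1) + editDist u v := by
              have := ih u v (by simp at h ⊢; omega); omega
      omega

lemma rowMin_le (u v : List α) (j : ℕ) (hj : j ≤ v.length) :
    rowMin u v ≤ editDist u (v.take j) :=
  Finset.inf'_le _ (by simp; omega)

lemma rowMin_exists (u v : List α) :
    ∃ j ≤ v.length, rowMin u v = editDist u (v.take j) := by
  obtain ⟨j, hj, hmin⟩ := Finset.exists_mem_eq_inf' (s := Finset.range (v.length + 1))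
    (by simp) (fun j => editDist u (v.take j))
  exact ⟨j, by simpa using Nat.lt_succ_iff.mp (Finset.mem_range.mp hj), hmin⟩

lemma rowMin_cons_left (x : α) (u v : List α) :
    rowMin (x :: u) v ≤ 1 + rowMin u v := by
  obtain ⟨j, hj, hmin⟩ := rowMin_exists u v
  calc rowMin (x :: u) v ≤ editDist (x :: u) (v.take j) := rowMin_le _ _ _ hj
    _ ≤ 1 + editDist u (v.take j) := editDist_le_delete _ _ _
    _ = 1 + rowMin u v := by rw [hmin]

lemma rowMin_cons_right (u : List α) (y : α) (v : List α) :
    rowMin u (y :: v) ≤ 1 + rowMin u v := by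
  obtain ⟨j, hj, hmin⟩ := rowMin_exists u v
  calc rowMin u (y :: v) ≤ editDist u ((y :: v).take (j + 1)) :=
        rowMin_le _ _ _ (by simp; omega)
    _ = editDist u (y :: v.take j) := by simp
    _ ≤ 1 + editDist u (v.take j) := editDist_le_insert _ _ _
    _ = 1 + rowMin u v := by rw [hmin]

lemma rowMin_cons_cons (x : α) (u : List α) (y : α) (v : List α) :
    rowMin (x :: u) (y :: v) ≤ (if x = y then 0 else 1) + rowMin u v := by
  obtain ⟨j, hj, hmin⟩ := rowMin_exists u v
  calc rowMin (x :: u) (y :: v) ≤ editDist (x :: u) ((y :: v).take (j + 1)) :=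
        rowMin_le _ _ _ (by simp; omega)
    _ = editDist (x :: u) (y :: v.take j) := by simp
    _ ≤ (if x = y then 0 else 1) + editDist u (v.take j) := editDist_le_sub _ _ _ _
    _ = (if x = y then 0 else 1) + rowMin u v := by rw [hmin]

/-- Key lower bound: the minimum over prefixes is a lower bound for any extension. -/
lemma rowMin_le_editDist_append (a : α) (w : List α) :
    ∀ n (u v : List α), u.length + v.length ≤ n →
      rowMin u v ≤ editDist (u ++ a :: w) v := by
  intro n
  induction n with
  | zero =>
    intro u v h
    match u, v with
    | [], [] => exact le_trans (rowMin_le [] [] 0 (by simp)) (by simp [editDist_nil_right])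
    | x :: u, _ => simp at h
    | [], y :: v => simp at h
  | succ n ih =>
    intro u v h
    match u, v with
    | [], v =>
      calc rowMin [] v ≤ editDist [] (v.take 0) := rowMin_le _ _ _ (by simp)
        _ = 0 := by simp [editDist, unitLevenshtein]
        _ ≤ _ := Nat.zero_le _
    | x :: u, [] =>
      calc rowMin (x :: u) [] ≤ editDist (x :: u) [] := rowMin_le _ _ 0 (by simp)
        _ ≤ editDist ((x :: u) ++ a :: w) [] := by
            simp [editDist_nil_right]
    | x :: u, y :: v =>
      have hrw : (x :: u) ++ a :: w = x :: (u ++ a :: w) := by simp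
      rw [hrw, editDist_cons_cons]
      have h1 : rowMin (x :: u) (y :: v) ≤ 1 + editDist (u ++ a :: w) (y :: v) := by
        have := ih u (y :: v) (by simp at h ⊢; omega)
        have := rowMin_cons_left x u (y :: v)
        omega
      have h2 : rowMin (x :: u) (y :: v) ≤ 1 + editDist (x :: (u ++ a :: w)) v := by
        have hIH := ih (x :: u) v (by simp at h ⊢; omega)
        rw [hrw] at hIH
        have hcr := rowMin_cons_right (x :: u) y v
        omega
      have h3 : rowMin (x :: u) (y :: v) ≤
          (if x = y then 0 else 1) + editDist (u ++ a :: w) v := by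
        have := ih u v (by simp at h ⊢; omega)
        have := rowMin_cons_cons x u y v
        omega
      omega

end Aux

theorem optimal_extension_of_min_prefix {α : Type*} [DecidableEq α]
    (p ystar : List α) (k : ℕ) (hk : k < ystar.length)
    (h : editDist p (ystar.take k) = rowMin p ystar) :
    sInf {d | ∃ s : List α, d = editDist (p ++ ystar[k] :: s) ystar}
      = rowMin p ystar := by
  have hwit : ystar[k] :: ystar.drop (k + 1) = ystar.drop k := by
    rw [List.drop_eq_getElem_cons hk]
  have hmem : editDist (p ++ ystar.drop k) ystar ∈
      {d | ∃ s : List α, d = editDist (p ++ ystar[k] :: s) ystar} :=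
    ⟨ystar.drop (k + 1), by rw [hwit]⟩
  apply le_antisymm
  · -- sInf ≤ rowMin, via the witness s = ystar.drop (k+1)
    refine le_trans (Nat.sInf_le hmem) ?_
    have : editDist (p ++ ystar.drop k) ystar ≤ editDist p (ystar.take k) := by
      have h2 := editDist_append_append (ystar.drop k) (p.length + (ystar.take k).length) p
        (ystar.take k) le_rfl
      rwa [List.take_append_drop] at h2
    omega
  · -- rowMin ≤ sInf
    refine le_csInf ⟨_, hmem⟩ ?_
    rintro d ⟨s, rfl⟩
    exact rowMin_le_editDist_append ystar[k] s (p.length + ystar.length) p ystar le_rfl
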